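/- Let M be an oriented matroid with set of covectors L on ground set U and D ⊆ U. Then D is shattered by the topes of M if and only if D contains the support of no circuit of M, i.e., D is independent in the underlying matroid. -/

import Mathlib

variable {U : Type*} [Fintype U] [DecidableEq U]

/-- Composition of sign vectors. -/
def sComp (X Y : U → SignType) : U → SignType :=
  fun e => if X e = 0 then Y e else X e

/-- The sign-vector partial order. -/
def sLe (X Y : U → SignType) : Prop := ∀ e, X e = 0 ∨ X e = Y e

/-- Support of a sign vector. -/
def supp (X : U → SignType) : Set U := {e | X e ≠ 0}

/-- Orthogonality of sign vectors. -/
def ortho (X Y : U → SignType) : Prop :=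
  supp X ∩ supp Y = ∅ ∨
    ∃ e ∈ supp X ∩ supp Y, ∃ f ∈ supp X ∩ supp Y, X e * Y e = -(X f * Y f)

/-! ### Auxiliary machinery -/

/-- Finset version of the support. -/
def fsupp (X : U → SignType) : Finset U := Finset.univ.filter (fun e => X e ≠ 0)

lemma mem_fsupp {X : U → SignType} {e : U} : e ∈ fsupp X ↔ X e ≠ 0 := by
  simp [fsupp]

lemma mem_supp {X : U → SignType} {e : U} : e ∈ supp X ↔ X e ≠ 0 := Iff.rfl

lemma st_mul_self : ∀ a : SignType, a ≠ 0 → a * a = 1 := by decide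
lemma st_mul_neg_self : ∀ a : SignType, a ≠ 0 → a * (-a) = -1 := by decide
lemma st_mul_ne_zero : ∀ a b : SignType, a ≠ 0 → b ≠ 0 → a * b ≠ 0 := by decide
lemma st_eq_of_mul_eq_one : ∀ a b : SignType, a * b = 1 → b = a := by decide
lemma st_cases : ∀ a : SignType, a ≠ 0 → a = 1 ∨ a = -1 := by decide
lemma st_neg_eq_zero : ∀ a : SignType, -a = 0 ↔ a = 0 := by decide
lemma st_mul_neg : ∀ a b : SignType, a * (-b) = -(a * b) := by decide

lemma sLe_trans {X Y Z : U → SignType} (h1 : sLe X Y) (h2 : sLe Y Z) : sLe X Z := by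
  intro e
  rcases h1 e with h | h
  · exact Or.inl h
  · rcases h2 e with h' | h'
    · exact Or.inl (h.trans h')
    · exact Or.inr (h.trans h')

lemma sLe_fsupp_subset {X Y : U → SignType} (h : sLe X Y) : fsupp X ⊆ fsupp Y := by
  intro e he
  rw [mem_fsupp] at he ⊢
  rcases h e with h' | h'
  · exact absurd h' he
  · rw [← h'] ; exact he

lemma sLe_card_lt {X Y : U → SignType} (h : sLe X Y) (hne : X ≠ Y) :
    (fsupp X).card < (fsupp Y).card := by
  obtain ⟨e, he⟩ := Function.ne_iff.mp hne
  have hX0 : X e = 0 := by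
    rcases h e with h' | h'
    · exact h'
    · exact absurd h' he
  have hY : Y e ≠ 0 := fun hy => he (by rw [hX0, hy])
  refine Finset.card_lt_card ?_
  rw [Finset.ssubset_iff_of_subset (sLe_fsupp_subset h)]
  exact ⟨e, mem_fsupp.mpr hY, fun hc => (mem_fsupp.mp hc) hX0⟩

/-- Every covector extends to a maximal covector (tope). -/
lemma exists_tope_above (L : Set (U → SignType)) {Z : U → SignType} (hZ : Z ∈ L) :
    ∃ T ∈ L, sLe Z T ∧ ∀ Y ∈ L, sLe T Y → Y = T := by
  have hfin : {W | W ∈ L ∧ sLe Z W}.Finite := Set.toFinite _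
  obtain ⟨T, ⟨hTL, hZT⟩, hmax⟩ := Set.Finite.exists_maximalFor
    (fun W => (fsupp W).card) _ hfin ⟨Z, hZ, fun e => Or.inr rfl⟩
  refine ⟨T, hTL, hZT, fun Y hY hTY => ?_⟩
  by_contra hne
  have hlt := sLe_card_lt hTY (fun h => hne h.symm)
  exact absurd (hmax ⟨hY, sLe_trans hZT hTY⟩ hlt.le) (not_le.mpr hlt)

/-- Below every nonzero covector there is a cocircuit. -/
lemma exists_cocircuit_below (L : Set (U → SignType)) {X : U → SignType}
    (hX : X ∈ L) (hX0 : X ≠ 0) :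
    ∃ Y, (Y ∈ L ∧ Y ≠ 0 ∧ ∀ Z ∈ L, Z ≠ 0 → sLe Z Y → Z = Y) ∧ sLe Y X := by
  have hfin : {W | W ∈ L ∧ W ≠ 0 ∧ sLe W X}.Finite := Set.toFinite _
  obtain ⟨Y, ⟨hYL, hY0, hYX⟩, hmin⟩ := Set.Finite.exists_minimalFor
    (fun W => (fsupp W).card) _ hfin ⟨X, hX, hX0, fun e => Or.inr rfl⟩
  refine ⟨Y, ⟨hYL, hY0, fun Z hZ hZ0 hZY => ?_⟩, hYX⟩
  by_contra hne
  have hlt := sLe_card_lt hZY hne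
  exact absurd (hmin ⟨hZ, hZ0, sLe_trans hZY hYX⟩ hlt.le) (not_le.mpr hlt)

/-- A sign vector orthogonal to all cocircuits is orthogonal to all covectors. -/
lemma ortho_all (L : Set (U → SignType))
    (hSE : ∀ X ∈ L, ∀ Y ∈ L, ∀ e, X e * Y e = -1 →
      ∃ Z ∈ L, Z e = 0 ∧ ∀ f, X f * Y f ≠ -1 → Z f = sComp X Y f)
    (hSym : ∀ X ∈ L, -X ∈ L)
    (C : U → SignType)
    (hcc : ∀ X, (X ∈ L ∧ X ≠ 0 ∧ ∀ Y ∈ L, Y ≠ 0 → sLe Y X → Y = X) → ortho C X) :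
    ∀ X ∈ L, ortho C X := by
  suffices h : ∀ n, ∀ X ∈ L, (fsupp X).card ≤ n → ortho C X by
    intro X hX; exact h _ X hX le_rfl
  intro n
  induction n with
  | zero =>
    intro X hX hcard
    left
    rw [Set.eq_empty_iff_forall_notMem]
    rintro e ⟨-, heX⟩
    have h1 : e ∈ fsupp X := mem_fsupp.mpr heX
    rw [Finset.card_eq_zero.mp (Nat.le_zero.mp hcard)] at h1
    exact absurd h1 (Finset.notMem_empty e)
  | succ n ih =>
    intro X hX hcard
    by_contra hno
    have hno1 : supp C ∩ supp X ≠ ∅ := fun h => hno (Or.inl h)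
    have hno2 : ¬ ∃ e ∈ supp C ∩ supp X, ∃ f ∈ supp C ∩ supp X, C e * X e = -(C f * X f) :=
      fun h => hno (Or.inr h)
    obtain ⟨e1, he1⟩ := Set.nonempty_iff_ne_empty.mpr hno1
    have hX0 : X ≠ 0 := by
      intro h
      apply he1.2
      rw [h]
      rfl
    obtain ⟨Y, ⟨hYL, hY0, hYmin⟩, hYX⟩ := exists_cocircuit_below L hX hX0
    have hYsub : ∀ g, Y g ≠ 0 → X g = Y g := by
      intro g hg
      rcases hYX g with h | h
      · exact absurd h hg
      · exact h.symm
    rcases hcc Y ⟨hYL, hY0, hYmin⟩ with hdisj | ⟨a, ha, b, hb, hab⟩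
    · -- supp C ∩ supp Y = ∅ : eliminate Y out of X
      have hCnotY : ∀ g, C g ≠ 0 → Y g = 0 := by
        intro g hgC
        by_contra hgY
        have hmem : g ∈ supp C ∩ supp Y := ⟨hgC, hgY⟩
        rw [hdisj] at hmem
        exact Set.notMem_empty g hmem
      obtain ⟨f, hf⟩ := Function.ne_iff.mp hY0
      simp only [Pi.zero_apply] at hf
      have hXf : X f = Y f := hYsub f hf
      have hprod : X f * (-Y) f = -1 := by
        rw [Pi.neg_apply, hXf]
        exact st_mul_neg_self _ hf
      obtain ⟨Z, hZL, hZf, hZeq⟩ := hSE X hX (-Y) (hSym Y hYL) f hprod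
      have hZX : ∀ g, Y g = 0 → Z g = X g := by
        intro g hg
        have h0 : X g * (-Y) g = 0 := by
          rw [Pi.neg_apply, hg]
          simp
        have hz := hZeq g (by rw [h0]; decide)
        rw [hz]
        by_cases hx : X g = 0
        · simp [sComp, hx, Pi.neg_apply, hg]
        · simp [sComp, hx]
      have hZsub : fsupp Z ⊆ fsupp X := by
        intro g hg
        rw [mem_fsupp] at hg ⊢
        by_cases hy : Y g = 0
        · rw [← hZX g hy]; exact hg
        · rw [hYsub g hy]; exact hy
      have hfX : f ∈ fsupp X := mem_fsupp.mpr (by rw [hXf]; exact hf)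
      have hfZ : f ∉ fsupp Z := by simp [mem_fsupp, hZf]
      have hcardZ : (fsupp Z).card ≤ n := by
        have hlt : (fsupp Z).card < (fsupp X).card :=
          Finset.card_lt_card ⟨hZsub, fun hs => hfZ (hs hfX)⟩
        omega
      rcases ih Z hZL hcardZ with hd | ⟨a, ha, b, hb, hab⟩
      · have hY1 : Y e1 = 0 := hCnotY e1 he1.1
        have hmem : e1 ∈ supp C ∩ supp Z := ⟨he1.1, by rw [mem_supp, hZX e1 hY1]; exact he1.2⟩
        rw [hd] at hmem
        exact Set.notMem_empty e1 hmem
      · have haZ : Z a = X a := hZX a (hCnotY a ha.1)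
        have hbZ : Z b = X b := hZX b (hCnotY b hb.1)
        apply hno2
        refine ⟨a, ⟨ha.1, ?_⟩, b, ⟨hb.1, ?_⟩, ?_⟩
        · rw [mem_supp, ← haZ]; exact ha.2
        · rw [mem_supp, ← hbZ]; exact hb.2
        · rw [← haZ, ← hbZ]; exact hab
    · apply hno2
      refine ⟨a, ⟨ha.1, ?_⟩, b, ⟨hb.1, ?_⟩, ?_⟩
      · rw [mem_supp, hYsub a ha.2]; exact ha.2
      · rw [mem_supp, hYsub b hb.2]; exact hb.2
      · rw [hYsub a ha.2, hYsub b hb.2]; exact hab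

/-- If `D` contains the support of no nonzero vector, then every sign pattern on `D`
is realized by a tope. -/
lemma shatter_of_indep (L : Set (U → SignType))
    (h0 : (0 : U → SignType) ∈ L)
    (hcomp : ∀ X ∈ L, ∀ Y ∈ L, sComp X Y ∈ L)
    (hSym : ∀ X ∈ L, -X ∈ L) :
    ∀ n (D : Set U), D.ncard ≤ n →
      (∀ C : U → SignType,
        (∀ X, (X ∈ L ∧ X ≠ 0 ∧ ∀ Y ∈ L, Y ≠ 0 → sLe Y X → Y = X) → ortho C X) →
        C ≠ 0 → supp C ⊆ D → False) →
      ∀ p : U → SignType, (∀ e ∈ D, p e ≠ 0) →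
      ∃ T ∈ L, (∀ Y ∈ L, sLe T Y → Y = T) ∧ ∀ e ∈ D, T e = p e := by
  intro n
  induction n with
  | zero =>
    intro D hcard _ p hp
    have hD : D = ∅ := (Set.ncard_eq_zero (Set.toFinite D)).mp (Nat.le_zero.mp hcard)
    obtain ⟨T, hTL, -, hTmax⟩ := exists_tope_above L h0
    refine ⟨T, hTL, hTmax, ?_⟩
    rw [hD]
    intro e he
    exact absurd he (Set.notMem_empty e)
  | succ n ih =>
    intro D hcard hindep p hp
    classical
    by_contra hno
    rcases Set.eq_empty_or_nonempty D with hDe | hDne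
    · obtain ⟨T, hTL, -, hTmax⟩ := exists_tope_above L h0
      exact hno ⟨T, hTL, hTmax, by rw [hDe]; intro e he; exact absurd he (Set.notMem_empty e)⟩
    set Chat : U → SignType := fun e => if e ∈ D then p e else 0 with hChat
    have hChatD : ∀ e ∈ D, Chat e = p e := fun e he => by simp [hChat, he]
    have hChatD' : ∀ e, e ∉ D → Chat e = 0 := fun e he => by simp [hChat, he]
    have hsuppChat : supp Chat = D := by
      ext e
      rw [mem_supp]
      constructor
      · intro h
        by_contra hd
        exact h (hChatD' e hd)
      · intro h
        rw [hChatD e h]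
        exact hp e h
    have key : ∀ Y ∈ L, ortho Chat Y := by
      intro Y hYL
      by_contra hnot
      have hn1 : supp Chat ∩ supp Y ≠ ∅ := fun h => hnot (Or.inl h)
      have hn2 : ¬ ∃ e ∈ supp Chat ∩ supp Y, ∃ f ∈ supp Chat ∩ supp Y,
          Chat e * Y e = -(Chat f * Y f) := fun h => hnot (Or.inr h)
      obtain ⟨e0, he0⟩ := Set.nonempty_iff_ne_empty.mpr hn1
      have hprodeq : ∀ e ∈ supp Chat ∩ supp Y, Chat e * Y e = Chat e0 * Y e0 := by
        intro e he
        have h1 : Chat e * Y e ≠ 0 := st_mul_ne_zero _ _ he.1 he.2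
        have h2 : Chat e0 * Y e0 ≠ 0 := st_mul_ne_zero _ _ he0.1 he0.2
        rcases st_cases _ h1 with ha | ha <;> rcases st_cases _ h2 with hb | hb
        · rw [ha, hb]
        · exact absurd ⟨e, he, e0, he0, by rw [ha, hb]; decide⟩ hn2
        · exact absurd ⟨e0, he0, e, he, by rw [ha, hb]; decide⟩ hn2
        · rw [ha, hb]
      obtain ⟨Y', hY'L, hY'supp, hY'prod⟩ :
          ∃ Y' ∈ L, supp Y' = supp Y ∧ ∀ e ∈ supp Chat ∩ supp Y, Chat e * Y' e = 1 := by
        rcases st_cases _ (st_mul_ne_zero _ _ he0.1 he0.2) with hb | hb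
        · exact ⟨Y, hYL, rfl, fun e he => by rw [hprodeq e he, hb]⟩
        · refine ⟨-Y, hSym Y hYL, ?_, fun e he => ?_⟩
          · ext g
            simp only [supp, Set.mem_setOf_eq, Pi.neg_apply, ne_eq, st_neg_eq_zero]
          · rw [Pi.neg_apply, st_mul_neg, hprodeq e he, hb]
            decide
      have he0D : e0 ∈ D := by rw [← hsuppChat]; exact he0.1
      have hcard' : (D \ {e0}).ncard ≤ n := by
        have h1 : (D \ {e0}).ncard < D.ncard :=
          Set.ncard_diff_singleton_lt_of_mem he0D (Set.toFinite D)
        omega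
      obtain ⟨T', hT'L, hT'max, hT'p⟩ := ih (D \ {e0}) hcard'
        (fun C h1 h2 h3 => hindep C h1 h2 (h3.trans Set.diff_subset)) p
        (fun e he => hp e he.1)
      have hWL : sComp Y' T' ∈ L := hcomp Y' hY'L T' hT'L
      have hWp : ∀ e ∈ D, sComp Y' T' e = p e := by
        intro e heD
        by_cases hy : Y' e = 0
        · have hWe : sComp Y' T' e = T' e := by simp [sComp, hy]
          have he0Y' : Y' e0 ≠ 0 := by
            have hm : e0 ∈ supp Y' := by rw [hY'supp]; exact he0.2
            exact hm
          have hee0 : e ≠ e0 := fun h => he0Y' (h ▸ hy)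
          rw [hWe]
          exact hT'p e ⟨heD, fun h => hee0 h⟩
        · have hWe : sComp Y' T' e = Y' e := by simp [sComp, hy]
          have heY : e ∈ supp Chat ∩ supp Y := by
            constructor
            · rw [hsuppChat]; exact heD
            · rw [← hY'supp]; exact hy
          have hone : Chat e * Y' e = 1 := hY'prod e heY
          rw [hChatD e heD] at hone
          rw [hWe]
          exact st_eq_of_mul_eq_one _ _ hone
      obtain ⟨T, hTL, hWT, hTmax⟩ := exists_tope_above L hWL
      have hTp : ∀ e ∈ D, T e = p e := by
        intro e he
        rcases hWT e with h | h
        · rw [hWp e he] at h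
          exact absurd h (hp e he)
        · rw [← h, hWp e he]
      exact hno ⟨T, hTL, hTmax, hTp⟩
    obtain ⟨e1, he1D⟩ := hDne
    have hne0 : Chat ≠ 0 := by
      intro h
      have hc := congrFun h e1
      rw [hChatD e1 he1D, Pi.zero_apply] at hc
      exact hp e1 he1D hc
    exact hindep Chat (fun X hX => key X hX.1) hne0 (by rw [hsuppChat])

/-- For an oriented matroid with covector set `L` on ground set `U` and
`D ⊆ U`, `D` is shattered by the topes of `M` iff `D` contains the support of no circuit of
`M` (i.e., `D` is independent in the underlying matroid). -/
theorem om_shatters_iff_independent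
    (L : Set (U → SignType))
    (hZ : (0 : U → SignType) ∈ L)
    (hC : ∀ X ∈ L, ∀ Y ∈ L, sComp X Y ∈ L)
    (hSE : ∀ X ∈ L, ∀ Y ∈ L, ∀ e, X e * Y e = -1 →
      ∃ Z ∈ L, Z e = 0 ∧ ∀ f, X f * Y f ≠ -1 → Z f = sComp X Y f)
    (hSym : ∀ X ∈ L, -X ∈ L)
    -- simplicity
    (hSimp1 : ∀ (e : U) (s : SignType), ∃ X ∈ L, X e = s)
    (hSimp2 : ∀ e f : U, e ≠ f → (∃ X ∈ L, X e * X f = 1) ∧ ∃ Y ∈ L, Y e * Y f = -1)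
    (D : Set U) :
    -- `D` is shattered by the topes (the maximal covectors)
    (∀ p : U → SignType, (∀ e ∈ D, p e ≠ 0) →
      ∃ T ∈ L, (∀ Y ∈ L, sLe T Y → Y = T) ∧ ∀ e ∈ D, T e = p e) ↔
    -- `D` contains the support of no circuit
    (∀ C : U → SignType,
      (∀ X, (X ∈ L ∧ X ≠ 0 ∧ ∀ Y ∈ L, Y ≠ 0 → sLe Y X → Y = X) → ortho C X) →
      C ≠ 0 →
      (∀ C' : U → SignType,
        (∀ X, (X ∈ L ∧ X ≠ 0 ∧ ∀ Y ∈ L, Y ≠ 0 → sLe Y X → Y = X) → ortho C' X) →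
        C' ≠ 0 → supp C' ⊆ supp C → supp C' = supp C) →
      ¬ supp C ⊆ D) := by
  classical
  constructor
  · intro hsh C hCorth hC0 _hmin hsub
    have hall := ortho_all L hSE hSym C hCorth
    have hp : ∀ e ∈ D, (fun e => if C e = 0 then 1 else C e) e ≠ 0 := by
      intro e _
      by_cases h : C e = 0
      · simp [h]
      · simp [h]
    obtain ⟨T, hTL, hTmax, hTp⟩ := hsh (fun e => if C e = 0 then 1 else C e) hp
    have hTC : ∀ e, C e ≠ 0 → T e = C e := by
      intro e he
      rw [hTp e (hsub he)]
      simp [he]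
    obtain ⟨e1, he1⟩ := Function.ne_iff.mp hC0
    simp only [Pi.zero_apply] at he1
    rcases hall T hTL with hd | ⟨a, ha, b, hb, hab⟩
    · have hmem : e1 ∈ supp C ∩ supp T := ⟨he1, by rw [mem_supp, hTC e1 he1]; exact he1⟩
      rw [hd] at hmem
      exact Set.notMem_empty e1 hmem
    · have h1 : C a * T a = 1 := by rw [hTC a ha.1]; exact st_mul_self _ ha.1
      have h2 : C b * T b = 1 := by rw [hTC b hb.1]; exact st_mul_self _ hb.1
      rw [h1, h2] at hab
      exact absurd hab (by decide)
  · intro hrhs p hp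
    have hindep : ∀ C : U → SignType,
        (∀ X, (X ∈ L ∧ X ≠ 0 ∧ ∀ Y ∈ L, Y ≠ 0 → sLe Y X → Y = X) → ortho C X) →
        C ≠ 0 → supp C ⊆ D → False := by
      intro C h1 h2 h3
      have hfin : {C' : U → SignType |
          (∀ X, (X ∈ L ∧ X ≠ 0 ∧ ∀ Y ∈ L, Y ≠ 0 → sLe Y X → Y = X) → ortho C' X) ∧
          C' ≠ 0 ∧ supp C' ⊆ D}.Finite := Set.toFinite _
      obtain ⟨Cm, ⟨hm1, hm2, hm3⟩, hmin⟩ := Set.Finite.exists_minimalFor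
        (fun W => (fsupp W).card) _ hfin ⟨C, h1, h2, h3⟩
      refine hrhs Cm hm1 hm2 ?_ hm3
      intro C' hC'1 hC'2 hC'sub
      have hsubf : fsupp C' ⊆ fsupp Cm := by
        intro g hg
        rw [mem_fsupp] at hg ⊢
        exact hC'sub hg
      have heq : (fsupp C').card = (fsupp Cm).card :=
        le_antisymm (Finset.card_le_card hsubf) (hmin ⟨hC'1, hC'2, fun g hg => hm3 (hC'sub hg)⟩ (Finset.card_le_card hsubf))
      have hfeq : fsupp C' = fsupp Cm := Finset.eq_of_subset_of_card_le hsubf heq.ge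
      ext g
      rw [mem_supp, ← mem_fsupp, hfeq, mem_fsupp, ← mem_supp]
    exact shatter_of_indep L hZ hC hSym D.ncard D le_rfl hindep p hp
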